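/- arXiv:1801.03348 — 3 statements merged into one kernel-verified Lean document; each statement's English description precedes it below -/
import Mathlib

section
/- Let A, B, C, D be four points on a circle in this cyclic order, and let X, Y, Z, T be the incenters of triangles ADC, DCB, CBA, and BAD respectively. Then the quadrilateral XYZT is a rectangle. -/
open EuclideanGeometry Metric Real

/-- The point at angle `θ` on the circle centered at `O` with radius `r`
in the Euclidean plane. -/
noncomputable def circlePt (O : EuclideanSpace ℝ (Fin 2)) (r θ : ℝ) :
    EuclideanSpace ℝ (Fin 2) :=
  O + r • (WithLp.equiv 2 (Fin 2 → ℝ)).symm ![Real.cos θ, Real.sin θ]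

/-- The side disk of the arc from angle `a` to angle `b` (traversed in increasing angle)
of the circle centered at `O` with radius `r`: the closed disk centered at the midpoint
of the arc whose boundary passes through the two endpoints of the arc. -/
noncomputable def sideDisk (O : EuclideanSpace ℝ (Fin 2)) (r a b : ℝ) :
    Set (EuclideanSpace ℝ (Fin 2)) :=
  Metric.closedBall (circlePt O r ((a + b) / 2))
    (dist (circlePt O r ((a + b) / 2)) (circlePt O r a))

/-- The boundary circle of the side disk of the arc from angle `a` to angle `b`. -/
noncomputable def sideCircle (O : EuclideanSpace ℝ (Fin 2)) (r a b : ℝ) :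
    Set (EuclideanSpace ℝ (Fin 2)) :=
  Metric.sphere (circlePt O r ((a + b) / 2))
    (dist (circlePt O r ((a + b) / 2)) (circlePt O r a))

open scoped RealInnerProductSpace

noncomputable def ept (θ : ℝ) : EuclideanSpace ℝ (Fin 2) :=
  (WithLp.equiv 2 (Fin 2 → ℝ)).symm ![Real.cos θ, Real.sin θ]

noncomputable def upt (θ : ℝ) : EuclideanSpace ℝ (Fin 2) :=
  (WithLp.equiv 2 (Fin 2 → ℝ)).symm ![-Real.sin θ, Real.cos θ]

lemma inner_ept_ept (θ φ : ℝ) : ⟪ept θ, ept φ⟫ = Real.cos (θ - φ) := by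
  simp [ept, PiLp.inner_apply, Fin.sum_univ_two, Real.cos_sub, mul_comm]

lemma inner_ept_upt (θ φ : ℝ) : ⟪ept θ, upt φ⟫ = Real.sin (θ - φ) := by
  simp [ept, upt, PiLp.inner_apply, Fin.sum_univ_two, Real.sin_sub]
  ring

lemma norm_upt (θ : ℝ) : ‖upt θ‖ = 1 := by
  simp [upt, EuclideanSpace.norm_eq, Fin.sum_univ_two]

noncomputable def circlePt' (O : EuclideanSpace ℝ (Fin 2)) (r θ : ℝ) :
    EuclideanSpace ℝ (Fin 2) := O + r • ept θ

lemma circlePt'_periodic (O : EuclideanSpace ℝ (Fin 2)) (r θ : ℝ) :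
    circlePt' O r (θ + 2 * π) = circlePt' O r θ := by
  simp [circlePt', ept, Real.cos_add_two_pi, Real.sin_add_two_pi]

lemma upt_add_pi (θ : ℝ) : upt (θ + π) = -upt θ := by
  refine PiLp.ext fun i => ?_
  fin_cases i <;> simp [upt]

lemma chord (O : EuclideanSpace ℝ (Fin 2)) (r θ φ : ℝ) :
    circlePt' O r φ - circlePt' O r θ
      = (2 * r * Real.sin ((φ - θ) / 2)) • upt ((θ + φ) / 2) := by
  have hφ : φ = (θ + φ) / 2 + (φ - θ) / 2 := by ring
  have hθ : θ = (θ + φ) / 2 - (φ - θ) / 2 := by ring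
  refine PiLp.ext fun i => ?_
  fin_cases i <;>
    simp only [circlePt', ept, upt, PiLp.add_apply, PiLp.sub_apply, PiLp.smul_apply,
      WithLp.equiv_symm_apply, WithLp.ofLp_toLp, Fin.mk_zero, Fin.mk_one, Matrix.cons_val_zero, Matrix.cons_val_one, Matrix.head_cons,
      smul_eq_mul]
  · rw [show Real.cos φ = Real.cos ((θ + φ) / 2 + (φ - θ) / 2) by rw [← hφ],
      show Real.cos θ = Real.cos ((θ + φ) / 2 - (φ - θ) / 2) by rw [← hθ],
      Real.cos_add, Real.cos_sub]
    ring
  · rw [show Real.sin φ = Real.sin ((θ + φ) / 2 + (φ - θ) / 2) by rw [← hφ],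
      show Real.sin θ = Real.sin ((θ + φ) / 2 - (φ - θ) / 2) by rw [← hθ],
      Real.sin_add, Real.sin_sub]
    ring

lemma angle_cond {A B C P : EuclideanSpace ℝ (Fin 2)} {u₁ u₂ : EuclideanSpace ℝ (Fin 2)}
    {m n : ℝ} (hm : 0 < m) (hn : 0 < n) (hu₁ : ‖u₁‖ = 1) (hu₂ : ‖u₂‖ = 1)
    (hB : B - A = m • u₁) (hC : C - A = n • u₂) (hP : P ≠ A)
    (h : ∠ B A P = ∠ P A C) : ⟪P - A, u₁⟫ = ⟪P - A, u₂⟫ := by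
  have hPA : ‖P - A‖ ≠ 0 := by
    simpa [sub_eq_zero] using hP
  have h1 : Real.cos (∠ B A P) = Real.cos (∠ P A C) := by rw [h]
  rw [EuclideanGeometry.angle, EuclideanGeometry.angle,
    InnerProductGeometry.cos_angle, InnerProductGeometry.cos_angle] at h1
  simp only [vsub_eq_sub] at h1
  rw [hB, hC] at h1
  rw [norm_smul, norm_smul, hu₁, hu₂, real_inner_smul_left, real_inner_smul_right] at h1
  rw [Real.norm_eq_abs, Real.norm_eq_abs, abs_of_pos hm, abs_of_pos hn, mul_one, mul_one] at h1
  rw [real_inner_comm (P - A) u₁] at h1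
  rw [mul_div_mul_left _ _ hm.ne', mul_comm (‖P - A‖) n, mul_div_mul_left _ _ hn.ne'] at h1
  exact (div_left_inj' hPA).mp h1

lemma cos_lt_one_of (x : ℝ) (h1 : 0 < x) (h2 : x < 2 * π) : Real.cos x < 1 := by
  rcases lt_or_eq_of_le (Real.cos_le_one x) with h | h
  · exact h
  · exfalso
    rw [Real.cos_eq_one_iff_of_lt_of_lt (by linarith) (by linarith)] at h
    linarith

lemma not_collinear_circle (O : EuclideanSpace ℝ (Fin 2)) (r : ℝ) (hr : 0 < r)
    (θ₁ θ₂ θ₃ t : ℝ)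
    (h12 : Real.cos (θ₁ - θ₂) < 1) (h32 : Real.cos (θ₃ - θ₂) < 1)
    (h31 : Real.cos (θ₃ - θ₁) < 1)
    (h : circlePt' O r θ₃ - circlePt' O r θ₂ = t • (circlePt' O r θ₁ - circlePt' O r θ₂)) :
    False := by
  have h0 := congrFun (congrArg WithLp.ofLp h) 0
  have h1 := congrFun (congrArg WithLp.ofLp h) 1
  simp only [circlePt', ept, PiLp.sub_apply, PiLp.add_apply, PiLp.smul_apply,
    WithLp.equiv_symm_apply, WithLp.ofLp_toLp, Matrix.cons_val_zero, Matrix.cons_val_one, Matrix.head_cons,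
    smul_eq_mul] at h0 h1
  have e0 : Real.cos θ₃ - Real.cos θ₂ = t * (Real.cos θ₁ - Real.cos θ₂) :=
    mul_left_cancel₀ hr.ne' (by linear_combination h0)
  have e1 : Real.sin θ₃ - Real.sin θ₂ = t * (Real.sin θ₁ - Real.sin θ₂) :=
    mul_left_cancel₀ hr.ne' (by linear_combination h1)
  have p1 := Real.sin_sq_add_cos_sq θ₁
  have p2 := Real.sin_sq_add_cos_sq θ₂
  have p3 := Real.sin_sq_add_cos_sq θ₃
  rw [Real.cos_sub] at h12 h32 h31
  have key : 2 * t * (1 - t) *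
      (1 - (Real.cos θ₁ * Real.cos θ₂ + Real.sin θ₁ * Real.sin θ₂)) = 0 := by
    linear_combination (-1 : ℝ) * p3 + (1 - t)^2 * p2 + t^2 * p1
      + (Real.cos θ₃ + (1 - t) * Real.cos θ₂ + t * Real.cos θ₁) * e0
      + (Real.sin θ₃ + (1 - t) * Real.sin θ₂ + t * Real.sin θ₁) * e1
  rcases mul_eq_zero.mp key with key' | key'
  · rcases mul_eq_zero.mp key' with key'' | key''
    · have ht : t = 0 := by linarith
      rw [ht] at e0 e1
      nlinarith [e0, e1, p2, h32]
    · have ht : t = 1 := by linarith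
      rw [ht] at e0 e1
      nlinarith [e0, e1, p1, h31]
  · linarith

lemma no_zero_angle (O : EuclideanSpace ℝ (Fin 2)) (r : ℝ) (hr : 0 < r)
    (θ₁ θ₂ θ₃ : ℝ)
    (h12 : Real.cos (θ₁ - θ₂) < 1) (h32 : Real.cos (θ₃ - θ₂) < 1)
    (h31 : Real.cos (θ₃ - θ₁) < 1)
    (h : ∠ (circlePt' O r θ₁) (circlePt' O r θ₂) (circlePt' O r θ₃) = 0) : False := by
  rw [EuclideanGeometry.angle] at h
  simp only [vsub_eq_sub] at h
  rw [InnerProductGeometry.angle_eq_zero_iff] at h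
  obtain ⟨-, t, ht, hteq⟩ := h
  exact not_collinear_circle O r hr θ₁ θ₂ θ₃ t h12 h32 h31 hteq

lemma circle_pts_ne (O : EuclideanSpace ℝ (Fin 2)) (r : ℝ) (hr : 0 < r) (θ φ : ℝ)
    (hc : Real.cos (φ - θ) < 1) : circlePt' O r φ ≠ circlePt' O r θ := by
  intro h
  have h0 := congrFun (congrArg WithLp.ofLp h) 0
  have h1 := congrFun (congrArg WithLp.ofLp h) 1
  simp only [circlePt', ept, PiLp.add_apply, PiLp.smul_apply,
    WithLp.equiv_symm_apply, WithLp.ofLp_toLp, Matrix.cons_val_zero, Matrix.cons_val_one, Matrix.head_cons,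
    smul_eq_mul] at h0 h1
  have e0 : Real.cos φ = Real.cos θ := mul_left_cancel₀ hr.ne' (by linear_combination h0)
  have e1 : Real.sin φ = Real.sin θ := mul_left_cancel₀ hr.ne' (by linear_combination h1)
  rw [Real.cos_sub, e0, e1] at hc
  nlinarith [Real.sin_sq_add_cos_sq θ]

lemma incenter_unique (O : EuclideanSpace ℝ (Fin 2)) (r : ℝ) (hr : 0 < r)
    (α β γ : ℝ) (h1 : α < β) (h2 : β < γ) (h3 : γ < α + 2 * π)
    (P : EuclideanSpace ℝ (Fin 2))
    (hA : ∠ (circlePt' O r β) (circlePt' O r α) P = ∠ P (circlePt' O r α) (circlePt' O r γ))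
    (hB : ∠ (circlePt' O r γ) (circlePt' O r β) P = ∠ P (circlePt' O r β) (circlePt' O r α)) :
    P = O + r • (ept ((α + β) / 2) + ept ((β + γ) / 2) - ept ((α + γ) / 2)) := by
  have pi_pos := Real.pi_pos
  set A := circlePt' O r α with hAdef
  set B := circlePt' O r β with hBdef
  set C := circlePt' O r γ with hCdef
  set I := O + r • (ept ((α + β) / 2) + ept ((β + γ) / 2) - ept ((α + γ) / 2)) with hIdef
  -- cos facts
  have cba : Real.cos (β - α) < 1 := cos_lt_one_of _ (by linarith) (by linarith)
  have cgb : Real.cos (γ - β) < 1 := cos_lt_one_of _ (by linarith) (by linarith)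
  have cga : Real.cos (γ - α) < 1 := cos_lt_one_of _ (by linarith) (by linarith)
  have cab : Real.cos (α - β) < 1 := by rw [show α - β = -(β - α) by ring, Real.cos_neg]; exact cba
  have cbg : Real.cos (β - γ) < 1 := by rw [show β - γ = -(γ - β) by ring, Real.cos_neg]; exact cgb
  have cag : Real.cos (α - γ) < 1 := by rw [show α - γ = -(γ - α) by ring, Real.cos_neg]; exact cga
  -- P is not a vertex
  have hPA : P ≠ A := by
    intro hP
    rw [hP] at hB
    have hABne : A ≠ B := by rw [hAdef, hBdef]; exact circle_pts_ne O r hr β α cab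
    rw [EuclideanGeometry.angle_self_of_ne hABne] at hB
    exact no_zero_angle O r hr γ β α cgb cab cag hB
  have hPB : P ≠ B := by
    intro hP
    rw [hP] at hA
    have hBAne : B ≠ A := by rw [hAdef, hBdef]; exact circle_pts_ne O r hr α β cba
    rw [EuclideanGeometry.angle_self_of_ne hBAne] at hA
    exact no_zero_angle O r hr β α γ cba cga cgb hA.symm
  -- chord decompositions
  have cBA : B - A = (2 * r * Real.sin ((β - α) / 2)) • upt ((α + β) / 2) := chord O r α β
  have cCA : C - A = (2 * r * Real.sin ((γ - α) / 2)) • upt ((α + γ) / 2) := chord O r α γ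
  have cCB : C - B = (2 * r * Real.sin ((γ - β) / 2)) • upt ((β + γ) / 2) := chord O r β γ
  have cAB : A - B = (2 * r * Real.sin ((α + 2 * π - β) / 2)) • (-upt ((α + β) / 2)) := by
    rw [hAdef, hBdef, ← circlePt'_periodic O r α, chord O r β (α + 2 * π),
      show (β + (α + 2 * π)) / 2 = (α + β) / 2 + π by ring, upt_add_pi]
  have mBA : 0 < 2 * r * Real.sin ((β - α) / 2) := by
    have := Real.sin_pos_of_pos_of_lt_pi (x := (β - α) / 2) (by linarith) (by linarith)
    positivity
  have mCA : 0 < 2 * r * Real.sin ((γ - α) / 2) := by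
    have := Real.sin_pos_of_pos_of_lt_pi (x := (γ - α) / 2) (by linarith) (by linarith)
    positivity
  have mCB : 0 < 2 * r * Real.sin ((γ - β) / 2) := by
    have := Real.sin_pos_of_pos_of_lt_pi (x := (γ - β) / 2) (by linarith) (by linarith)
    positivity
  have mAB : 0 < 2 * r * Real.sin ((α + 2 * π - β) / 2) := by
    have := Real.sin_pos_of_pos_of_lt_pi (x := (α + 2 * π - β) / 2) (by linarith) (by linarith)
    positivity
  -- angle conditions as inner product equations
  have eq1 : ⟪P - A, upt ((α + β) / 2)⟫ = ⟪P - A, upt ((α + γ) / 2)⟫ :=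
    angle_cond mBA mCA (norm_upt _) (norm_upt _) cBA cCA hPA hA
  have eq2 : ⟪P - B, upt ((β + γ) / 2)⟫ = ⟪P - B, -upt ((α + β) / 2)⟫ :=
    angle_cond mCB mAB (norm_upt _) (by rw [norm_neg]; exact norm_upt _) cCB cAB hPB hB
  -- the explicit point I satisfies the same equations
  have hIA : I - A = r • (ept ((α + β) / 2) + ept ((β + γ) / 2) - ept ((α + γ) / 2) - ept α) := by
    rw [hIdef, hAdef, circlePt']
    module
  have hIB : I - B = r • (ept ((α + β) / 2) + ept ((β + γ) / 2) - ept ((α + γ) / 2) - ept β) := by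
    rw [hIdef, hBdef, circlePt']
    module
  have expandA : ∀ w, ⟪I - A, upt w⟫ = r * (Real.sin ((α + β) / 2 - w)
      + Real.sin ((β + γ) / 2 - w) - Real.sin ((α + γ) / 2 - w) - Real.sin (α - w)) := by
    intro w
    rw [hIA, real_inner_smul_left]
    simp only [inner_sub_left, inner_add_left, inner_ept_upt]
  have expandB : ∀ w, ⟪I - B, upt w⟫ = r * (Real.sin ((α + β) / 2 - w)
      + Real.sin ((β + γ) / 2 - w) - Real.sin ((α + γ) / 2 - w) - Real.sin (β - w)) := by
    intro w
    rw [hIB, real_inner_smul_left]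
    simp only [inner_sub_left, inner_add_left, inner_ept_upt]
  have eqI1 : ⟪I - A, upt ((α + β) / 2)⟫ = ⟪I - A, upt ((α + γ) / 2)⟫ := by
    rw [expandA, expandA,
      show (α + β) / 2 - (α + β) / 2 = (0:ℝ) by ring,
      show (β + γ) / 2 - (α + β) / 2 = (γ - α) / 2 by ring,
      show (α + γ) / 2 - (α + β) / 2 = (γ - β) / 2 by ring,
      show α - (α + β) / 2 = -((β - α) / 2) by ring,
      show (α + β) / 2 - (α + γ) / 2 = -((γ - β) / 2) by ring,
      show (β + γ) / 2 - (α + γ) / 2 = (β - α) / 2 by ring,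
      show (α + γ) / 2 - (α + γ) / 2 = (0:ℝ) by ring,
      show α - (α + γ) / 2 = -((γ - α) / 2) by ring]
    simp only [Real.sin_neg, Real.sin_zero]
    ring
  have eqI2 : ⟪I - B, upt ((β + γ) / 2)⟫ = ⟪I - B, -upt ((α + β) / 2)⟫ := by
    rw [inner_neg_right, expandB, expandB,
      show (α + β) / 2 - (β + γ) / 2 = -((γ - α) / 2) by ring,
      show (β + γ) / 2 - (β + γ) / 2 = (0:ℝ) by ring,
      show (α + γ) / 2 - (β + γ) / 2 = -((β - α) / 2) by ring,
      show β - (β + γ) / 2 = -((γ - β) / 2) by ring,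
      show (α + β) / 2 - (α + β) / 2 = (0:ℝ) by ring,
      show (β + γ) / 2 - (α + β) / 2 = (γ - α) / 2 by ring,
      show (α + γ) / 2 - (α + β) / 2 = (γ - β) / 2 by ring,
      show β - (α + β) / 2 = (β - α) / 2 by ring]
    simp only [Real.sin_neg, Real.sin_zero]
    ring
  -- difference is orthogonal to two independent directions
  have hw1 : ⟪P - I, upt ((α + β) / 2) - upt ((α + γ) / 2)⟫ = 0 := by
    rw [show P - I = (P - A) - (I - A) by abel, inner_sub_left, inner_sub_right,
      inner_sub_right, eq1, eqI1]
    ring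
  have hw2 : ⟪P - I, upt ((β + γ) / 2) + upt ((α + β) / 2)⟫ = 0 := by
    simp only [inner_neg_right] at eq2 eqI2
    rw [show P - I = (P - B) - (I - B) by abel, inner_sub_left, inner_add_right,
      inner_add_right, eq2, eqI2]
    ring
  -- extract coordinates
  have e1 : (P 0 - I 0) * (-Real.sin ((α + β) / 2) + Real.sin ((α + γ) / 2))
      + (P 1 - I 1) * (Real.cos ((α + β) / 2) - Real.cos ((α + γ) / 2)) = 0 := by
    have := hw1
    simp only [upt, PiLp.inner_apply, Fin.sum_univ_two, PiLp.sub_apply,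
      WithLp.equiv_symm_apply, WithLp.ofLp_toLp, Matrix.cons_val_zero, Matrix.cons_val_one, Matrix.head_cons,
      RCLike.inner_apply, conj_trivial] at this
    linear_combination this
  have e2 : (P 0 - I 0) * (-Real.sin ((β + γ) / 2) - Real.sin ((α + β) / 2))
      + (P 1 - I 1) * (Real.cos ((β + γ) / 2) + Real.cos ((α + β) / 2)) = 0 := by
    have := hw2
    simp only [upt, PiLp.inner_apply, Fin.sum_univ_two, PiLp.add_apply, PiLp.sub_apply,
      WithLp.equiv_symm_apply, WithLp.ofLp_toLp, Matrix.cons_val_zero, Matrix.cons_val_one, Matrix.head_cons,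
      RCLike.inner_apply, conj_trivial] at this
    linear_combination this
  -- the determinant is positive
  have hD : (-Real.sin ((α + β) / 2) + Real.sin ((α + γ) / 2))
        * (Real.cos ((β + γ) / 2) + Real.cos ((α + β) / 2))
      - (Real.cos ((α + β) / 2) - Real.cos ((α + γ) / 2))
        * (-Real.sin ((β + γ) / 2) - Real.sin ((α + β) / 2))
      = Real.sin ((β + γ) / 2 - (α + β) / 2) - Real.sin ((β + γ) / 2 - (α + γ) / 2)
        + Real.sin ((α + γ) / 2 - (α + β) / 2) := by
    rw [Real.sin_sub, Real.sin_sub, Real.sin_sub]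
    ring
  have hDpos : 0 < Real.sin ((β + γ) / 2 - (α + β) / 2) - Real.sin ((β + γ) / 2 - (α + γ) / 2)
      + Real.sin ((α + γ) / 2 - (α + β) / 2) := by
    rw [show (β + γ) / 2 - (α + β) / 2 = (γ - β) / 2 + (β - α) / 2 by ring,
      show (β + γ) / 2 - (α + γ) / 2 = (β - α) / 2 by ring,
      show (α + γ) / 2 - (α + β) / 2 = (γ - β) / 2 by ring]
    set p := (γ - β) / 2 with hp
    set q := (β - α) / 2 with hq
    have hp1 : 0 < p := by rw [hp]; linarith
    have hq1 : 0 < q := by rw [hq]; linarith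
    have hpq : p + q < π := by rw [hp, hq]; linarith
    have sinp := Real.sin_two_mul (p / 2)
    rw [show 2 * (p / 2) = p by ring] at sinp
    rw [Real.sin_sub_sin (p + q) q,
      show (p + q - q) / 2 = p / 2 by ring, show (p + q + q) / 2 = p / 2 + q by ring, sinp]
    have key : Real.cos (p / 2 + q) + Real.cos (p / 2) = 2 * Real.cos ((p + q) / 2) * Real.cos (q / 2) := by
      rw [Real.cos_add_cos, show (p / 2 + q + p / 2) / 2 = (p + q) / 2 by ring,
        show (p / 2 + q - p / 2) / 2 = q / 2 by ring]
    have hsp : 0 < Real.sin (p / 2) := Real.sin_pos_of_pos_of_lt_pi (by linarith) (by linarith)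
    have hc1 : 0 < Real.cos ((p + q) / 2) :=
      Real.cos_pos_of_mem_Ioo ⟨by linarith, by linarith⟩
    have hc2 : 0 < Real.cos (q / 2) :=
      Real.cos_pos_of_mem_Ioo ⟨by linarith, by linarith⟩
    have heq : 2 * Real.sin (p / 2) * Real.cos (p / 2 + q) + 2 * Real.sin (p / 2) * Real.cos (p / 2)
        = 4 * Real.sin (p / 2) * (Real.cos ((p + q) / 2) * Real.cos (q / 2)) := by
      linear_combination 2 * Real.sin (p / 2) * key
    rw [heq]
    linarith [mul_pos (mul_pos hsp hc1) hc2]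
  have hDne : (-Real.sin ((α + β) / 2) + Real.sin ((α + γ) / 2))
        * (Real.cos ((β + γ) / 2) + Real.cos ((α + β) / 2))
      - (Real.cos ((α + β) / 2) - Real.cos ((α + γ) / 2))
        * (-Real.sin ((β + γ) / 2) - Real.sin ((α + β) / 2)) ≠ 0 := by
    rw [hD]; exact ne_of_gt hDpos
  -- conclude coordinatewise
  have w0 : P 0 - I 0 = 0 := by
    have hz : (P 0 - I 0) * ((-Real.sin ((α + β) / 2) + Real.sin ((α + γ) / 2))
        * (Real.cos ((β + γ) / 2) + Real.cos ((α + β) / 2))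
      - (Real.cos ((α + β) / 2) - Real.cos ((α + γ) / 2))
        * (-Real.sin ((β + γ) / 2) - Real.sin ((α + β) / 2))) = 0 := by
      linear_combination (Real.cos ((β + γ) / 2) + Real.cos ((α + β) / 2)) * e1
        - (Real.cos ((α + β) / 2) - Real.cos ((α + γ) / 2)) * e2
    exact (mul_eq_zero.mp hz).resolve_right hDne
  have w1 : P 1 - I 1 = 0 := by
    have hz : (P 1 - I 1) * ((-Real.sin ((α + β) / 2) + Real.sin ((α + γ) / 2))
        * (Real.cos ((β + γ) / 2) + Real.cos ((α + β) / 2))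
      - (Real.cos ((α + β) / 2) - Real.cos ((α + γ) / 2))
        * (-Real.sin ((β + γ) / 2) - Real.sin ((α + β) / 2))) = 0 := by
      linear_combination (-Real.sin ((α + β) / 2) + Real.sin ((α + γ) / 2)) * e2
        - (-Real.sin ((β + γ) / 2) - Real.sin ((α + β) / 2)) * e1
    exact (mul_eq_zero.mp hz).resolve_right hDne
  refine PiLp.ext fun i => ?_
  fin_cases i
  · show P 0 = I 0
    linarith
  · show P 1 = I 1
    linarith

/-- `P` is the incenter of the triangle `ABC`: it lies on the internal angle bisector
lines from all three vertices (for a nondegenerate triangle these three lines meet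
only at the incenter). -/
def IsIncenter (P A B C : EuclideanSpace ℝ (Fin 2)) : Prop :=
  ∠ B A P = ∠ P A C ∧ ∠ C B P = ∠ P B A ∧ ∠ A C P = ∠ P C B

/-- If `A, B, C, D` lie in cyclic order on a circle and `X, Y, Z, T` are the incenters of
triangles `ADC`, `DCB`, `CBA`, `BAD`, then `XYZT` is a rectangle. -/
theorem stmt_5 (O : EuclideanSpace ℝ (Fin 2)) (r a b c d : ℝ) (hr : 0 < r)
    (hab : a < b) (hbc : b < c) (hcd : c < d) (hda : d < a + 2 * π)
    (X Y Z T : EuclideanSpace ℝ (Fin 2))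
    (hX : IsIncenter X (circlePt O r a) (circlePt O r d) (circlePt O r c))
    (hY : IsIncenter Y (circlePt O r d) (circlePt O r c) (circlePt O r b))
    (hZ : IsIncenter Z (circlePt O r c) (circlePt O r b) (circlePt O r a))
    (hT : IsIncenter T (circlePt O r b) (circlePt O r a) (circlePt O r d)) :
    ∠ T X Y = π / 2 ∧ ∠ X Y Z = π / 2 ∧ ∠ Y Z T = π / 2 ∧ ∠ Z T X = π / 2 := by
  have hcirc : ∀ θ, circlePt O r θ = circlePt' O r θ := fun θ => rfl
  simp only [IsIncenter, hcirc] at hX hY hZ hT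
  obtain ⟨x1, x2, x3⟩ := hX
  obtain ⟨y1, y2, y3⟩ := hY
  obtain ⟨z1, z2, z3⟩ := hZ
  obtain ⟨t1, t2, t3⟩ := hT
  have hx : X = O + r • (ept ((a + c) / 2) + ept ((c + d) / 2) - ept ((a + d) / 2)) := by
    apply incenter_unique O r hr a c d (by linarith) (by linarith) (by linarith) X
    · rw [EuclideanGeometry.angle_comm, ← x1, EuclideanGeometry.angle_comm]
    · rw [EuclideanGeometry.angle_comm, ← x3, EuclideanGeometry.angle_comm]
  have hy : Y = O + r • (ept ((b + c) / 2) + ept ((c + d) / 2) - ept ((b + d) / 2)) := by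
    apply incenter_unique O r hr b c d (by linarith) (by linarith) (by linarith) Y
    · rw [EuclideanGeometry.angle_comm, ← y3, EuclideanGeometry.angle_comm]
    · rw [EuclideanGeometry.angle_comm, ← y2, EuclideanGeometry.angle_comm]
  have hz : Z = O + r • (ept ((a + b) / 2) + ept ((b + c) / 2) - ept ((a + c) / 2)) := by
    apply incenter_unique O r hr a b c (by linarith) (by linarith) (by linarith) Z
    · rw [EuclideanGeometry.angle_comm, ← z3, EuclideanGeometry.angle_comm]
    · rw [EuclideanGeometry.angle_comm, ← z2, EuclideanGeometry.angle_comm]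
  have ht : T = O + r • (ept ((a + b) / 2) + ept ((b + d) / 2) - ept ((a + d) / 2)) := by
    apply incenter_unique O r hr a b d (by linarith) (by linarith) (by linarith) T
    · rw [EuclideanGeometry.angle_comm, ← t2, EuclideanGeometry.angle_comm]
    · rw [EuclideanGeometry.angle_comm, ← t1, EuclideanGeometry.angle_comm]
  have hYX : Y - X = r • (ept ((b + c) / 2) + ept ((a + d) / 2)
      - (ept ((b + d) / 2) + ept ((a + c) / 2))) := by
    rw [hy, hx]; module
  have hTX : T - X = r • (ept ((a + b) / 2) + ept ((b + d) / 2)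
      - (ept ((a + c) / 2) + ept ((c + d) / 2))) := by
    rw [ht, hx]; module
  have hZY : Z - Y = T - X := by rw [hz, hy, ht, hx]; module
  have hZT : Z - T = Y - X := by rw [hz, ht, hy, hx]; module
  have hinner : ⟪Y - X, T - X⟫ = 0 := by
    rw [hYX, hTX, real_inner_smul_left, real_inner_smul_right]
    simp only [inner_sub_left, inner_add_left, inner_sub_right, inner_add_right, inner_ept_ept]
    rw [show ((b + c) / 2 - (a + b) / 2 : ℝ) = c / 2 - a / 2 by ring,
      show ((b + c) / 2 - (b + d) / 2 : ℝ) = c / 2 - d / 2 by ring,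
      show ((b + c) / 2 - (a + c) / 2 : ℝ) = b / 2 - a / 2 by ring,
      show ((b + c) / 2 - (c + d) / 2 : ℝ) = b / 2 - d / 2 by ring,
      show ((a + d) / 2 - (a + b) / 2 : ℝ) = d / 2 - b / 2 by ring,
      show ((a + d) / 2 - (b + d) / 2 : ℝ) = a / 2 - b / 2 by ring,
      show ((a + d) / 2 - (a + c) / 2 : ℝ) = d / 2 - c / 2 by ring,
      show ((a + d) / 2 - (c + d) / 2 : ℝ) = a / 2 - c / 2 by ring,
      show ((b + d) / 2 - (a + b) / 2 : ℝ) = d / 2 - a / 2 by ring,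
      show ((b + d) / 2 - (b + d) / 2 : ℝ) = (0 : ℝ) by ring,
      show ((b + d) / 2 - (a + c) / 2 : ℝ) = (b / 2 + d / 2) - (a / 2 + c / 2) by ring,
      show ((b + d) / 2 - (c + d) / 2 : ℝ) = b / 2 - c / 2 by ring,
      show ((a + c) / 2 - (a + b) / 2 : ℝ) = c / 2 - b / 2 by ring,
      show ((a + c) / 2 - (b + d) / 2 : ℝ) = (a / 2 + c / 2) - (b / 2 + d / 2) by ring,
      show ((a + c) / 2 - (a + c) / 2 : ℝ) = (0 : ℝ) by ring,
      show ((a + c) / 2 - (c + d) / 2 : ℝ) = a / 2 - d / 2 by ring]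
    simp only [Real.cos_sub, Real.cos_add, Real.sin_add, Real.cos_zero]
    ring
  refine ⟨?_, ?_, ?_, ?_⟩
  · rw [EuclideanGeometry.angle]
    simp only [vsub_eq_sub]
    rw [← InnerProductGeometry.inner_eq_zero_iff_angle_eq_pi_div_two]
    rw [real_inner_comm]
    exact hinner
  · rw [EuclideanGeometry.angle]
    simp only [vsub_eq_sub]
    rw [← InnerProductGeometry.inner_eq_zero_iff_angle_eq_pi_div_two]
    rw [show X - Y = -(Y - X) by abel, hZY, inner_neg_left, hinner, neg_zero]
  · rw [EuclideanGeometry.angle]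
    simp only [vsub_eq_sub]
    rw [← InnerProductGeometry.inner_eq_zero_iff_angle_eq_pi_div_two]
    rw [show Y - Z = -(T - X) by rw [← hZY]; abel, show T - Z = -(Y - X) by rw [← hZT]; abel,
      inner_neg_neg, real_inner_comm, hinner]
  · rw [EuclideanGeometry.angle]
    simp only [vsub_eq_sub]
    rw [← InnerProductGeometry.inner_eq_zero_iff_angle_eq_pi_div_two]
    rw [hZT, show X - T = -(T - X) by abel, inner_neg_right, hinner, neg_zero]
end

section
/- Let Γ be a circle with n ≥ 2 marked points partitioning it into n arcs, and let ω and ω' be two side disks of this partition. Then ω and ω' intersect if and only if they intersect inside the closed disk bounded by Γ; i.e., ω ∩ ω' ≠ ∅ iff ω ∩ ω' ∩ D ≠ ∅, where D is the closed disk bounded by Γ. -/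
open EuclideanGeometry Metric Real

lemma dist_circlePt (O : EuclideanSpace ℝ (Fin 2)) (r : ℝ) (hr : 0 ≤ r) (t : ℝ) :
    dist O (circlePt O r t) = r := by
  unfold circlePt
  rw [dist_comm, dist_eq_norm, add_sub_cancel_left, norm_smul]
  have h1 : Real.cos t ^ 2 + Real.sin t ^ 2 = 1 := by
    rw [add_comm]; exact Real.sin_sq_add_cos_sq t
  have : ‖(WithLp.equiv 2 (Fin 2 → ℝ)).symm ![Real.cos t, Real.sin t]‖ = 1 := by
    rw [EuclideanSpace.norm_eq]
    simp [Fin.sum_univ_two, sq_abs, h1]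
  rw [this, mul_one, Real.norm_eq_abs, abs_of_nonneg hr]

lemma seg_point {E : Type*} [NormedAddCommGroup E] [NormedSpace ℝ E]
    (c1 c2 : E) (r1 r2 : ℝ) (h1 : 0 ≤ r1) (h2 : 0 ≤ r2) (hd : dist c1 c2 ≤ r1 + r2) :
    ∃ p ∈ segment ℝ c1 c2, p ∈ closedBall c1 r1 ∩ closedBall c2 r2 := by
  by_cases h : dist c1 c2 ≤ r1
  · exact ⟨c2, right_mem_segment ℝ c1 c2, by
      simpa [Metric.mem_closedBall, dist_comm] using h, by simp [h2]⟩
  · push_neg at h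
    have hd0 : 0 < dist c1 c2 := lt_of_le_of_lt h1 h
    have hr1 : 0 ≤ r1 := h1
    set d := dist c1 c2 with hdd
    set t : ℝ := r1 / d with ht
    have ht0 : 0 ≤ t := div_nonneg hr1 hd0.le
    have ht1 : t ≤ 1 := (div_le_one hd0).mpr h.le
    refine ⟨(1 - t) • c1 + t • c2, ⟨1 - t, t, by linarith, ht0, by ring, rfl⟩, ?_, ?_⟩
    · rw [Metric.mem_closedBall, dist_eq_norm]
      have e1 : (1 - t) • c1 + t • c2 - c1 = t • (c2 - c1) := by module
      rw [e1, norm_smul, Real.norm_eq_abs, abs_of_nonneg ht0, ← dist_eq_norm,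
        dist_comm c2 c1, ← hdd, ht, div_mul_cancel₀ _ hd0.ne']
    · rw [Metric.mem_closedBall, dist_eq_norm]
      have e2 : (1 - t) • c1 + t • c2 - c2 = (1 - t) • (c1 - c2) := by module
      rw [e2, norm_smul, Real.norm_eq_abs, abs_of_nonneg (by linarith : (0:ℝ) ≤ 1 - t),
        ← dist_eq_norm, ← hdd]
      have e3 : (1 - t) * d = d - r1 := by
        rw [ht]; field_simp
      rw [e3]; linarith

/-- Marked points on a circle are encoded by a strictly monotone angle function
`θ : ℕ → ℝ` with `θ (m + n) = θ m + 2π` (so there are `n` marked points in cyclic order,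
and the `i`-th side is the arc from `θ i` to `θ (i+1)`). Two side disks intersect iff
they intersect inside the closed disk bounded by the circle. -/
theorem stmt_8 (O : EuclideanSpace ℝ (Fin 2)) (r : ℝ) (hr : 0 < r)
    (n : ℕ) (hn : 2 ≤ n) (θ : ℕ → ℝ) (hmono : StrictMono θ)
    (hper : ∀ m, θ (m + n) = θ m + 2 * π) (i j : ℕ) :
    (sideDisk O r (θ i) (θ (i + 1)) ∩ sideDisk O r (θ j) (θ (j + 1))).Nonempty ↔
    (sideDisk O r (θ i) (θ (i + 1)) ∩ sideDisk O r (θ j) (θ (j + 1)) ∩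
      Metric.closedBall O r).Nonempty := by
  constructor
  · rintro ⟨x, hx1, hx2⟩
    set c1 := circlePt O r ((θ i + θ (i + 1)) / 2)
    set c2 := circlePt O r ((θ j + θ (j + 1)) / 2)
    set r1 := dist c1 (circlePt O r (θ i))
    set r2 := dist c2 (circlePt O r (θ j))
    have hd : dist c1 c2 ≤ r1 + r2 := by
      calc dist c1 c2 ≤ dist c1 x + dist x c2 := dist_triangle _ _ _
        _ ≤ r1 + r2 := add_le_add (dist_comm c1 x ▸ hx1) hx2
    obtain ⟨p, hp, hp1, hp2⟩ := seg_point c1 c2 r1 r2 dist_nonneg dist_nonneg hd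
    refine ⟨p, ⟨hp1, hp2⟩, ?_⟩
    have hc1 : c1 ∈ Metric.closedBall O r := by
      simp [Metric.mem_closedBall, dist_comm, dist_circlePt O r hr.le]
      exact (dist_circlePt O r hr.le _).le
    have hc2 : c2 ∈ Metric.closedBall O r := by
      simp [Metric.mem_closedBall, dist_comm, dist_circlePt O r hr.le]
      exact (dist_circlePt O r hr.le _).le
    exact (convex_closedBall O r).segment_subset hc1 hc2 hp
  · rintro ⟨x, ⟨hx1, hx2⟩, _⟩
    exact ⟨x, hx1, hx2⟩
end

section
/- Let A, B, C, D be points in cyclic order on a circle, X = incenter of triangle ADC, Y = incenter of DCB, Z = incenter of CBA, T = incenter of BAD, and E the intersection of the diagonals XZ and YT of rectangle XYZT. Let F and H be the midpoints of arcs CD and AB respectively (arcs not containing the other points). Then E lies on the segment FH. -/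
open EuclideanGeometry Metric Real
open scoped RealInnerProductSpace

lemma circlePt_apply0 (O : EuclideanSpace ℝ (Fin 2)) (r θ : ℝ) :
    circlePt O r θ 0 = O 0 + r * Real.cos θ := by simp [circlePt]
lemma circlePt_apply1 (O : EuclideanSpace ℝ (Fin 2)) (r θ : ℝ) :
    circlePt O r θ 1 = O 1 + r * Real.sin θ := by simp [circlePt]

lemma inner_apply2 (x y : EuclideanSpace ℝ (Fin 2)) :
    ⟪x, y⟫ = x 0 * y 0 + x 1 * y 1 := by
  simp [PiLp.inner_apply, Fin.sum_univ_two]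
  ring

lemma sub_apply2 (x y : EuclideanSpace ℝ (Fin 2)) (i : Fin 2) : (x - y) i = x i - y i := rfl

lemma norm_eq2 (x : EuclideanSpace ℝ (Fin 2)) : ‖x‖ = Real.sqrt (x 0 ^ 2 + x 1 ^ 2) := by
  rw [EuclideanSpace.norm_eq, Fin.sum_univ_two]
  simp [Real.norm_eq_abs, sq_abs]

lemma chord_s13 (O : EuclideanSpace ℝ (Fin 2)) (r p q : ℝ) (hr : 0 ≤ r)
    (h1 : q ≤ p) (h2 : p - q ≤ 2 * π) :
    ‖circlePt O r p - circlePt O r q‖ = 2 * r * Real.sin ((p - q) / 2) := by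
  have hs : Real.sin ((p - q) / 2) ≥ 0 := by
    apply Real.sin_nonneg_of_nonneg_of_le_pi <;> [linarith; linarith]
  rw [norm_eq2, sub_apply2, sub_apply2, circlePt_apply0, circlePt_apply0,
    circlePt_apply1, circlePt_apply1]
  have key : (O 0 + r * Real.cos p - (O 0 + r * Real.cos q)) ^ 2 +
      (O 1 + r * Real.sin p - (O 1 + r * Real.sin q)) ^ 2 =
      (2 * r * Real.sin ((p - q) / 2)) ^ 2 := by
    have hc : Real.cos (p - q) = Real.cos p * Real.cos q + Real.sin p * Real.sin q :=
      Real.cos_sub p q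
    have hh := Real.cos_add ((p - q)/2) ((p - q)/2)
    rw [show (p - q)/2 + (p - q)/2 = p - q by ring] at hh
    have h3 := Real.sin_sq_add_cos_sq p
    have h4 := Real.sin_sq_add_cos_sq q
    have h5 := Real.sin_sq_add_cos_sq ((p - q)/2)
    linear_combination (r^2)*h3 + (r^2)*h4 + 2*(r^2)*hc - 2*(r^2)*hh - 2*(r^2)*h5
  rw [key, Real.sqrt_sq (by positivity)]

lemma bisector {P A B C : EuclideanSpace ℝ (Fin 2)} (h : ∠ B A P = ∠ P A C) :
    ‖C - A‖ * ⟪B - A, P - A⟫ = ‖B - A‖ * ⟪C - A, P - A⟫ := by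
  have h1 := congrArg Real.cos h
  rw [EuclideanGeometry.angle, EuclideanGeometry.angle,
    InnerProductGeometry.cos_angle, InnerProductGeometry.cos_angle] at h1
  simp only [vsub_eq_sub] at h1
  by_cases hP : P - A = 0
  · rw [hP]; simp
  by_cases hB : B - A = 0
  · rw [hB]; simp
  by_cases hC : C - A = 0
  · rw [hC]; simp
  have hPn : ‖P - A‖ ≠ 0 := norm_ne_zero_iff.mpr hP
  have hBn : ‖B - A‖ ≠ 0 := norm_ne_zero_iff.mpr hB
  have hCn : ‖C - A‖ ≠ 0 := norm_ne_zero_iff.mpr hC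
  rw [div_eq_div_iff (by positivity) (by positivity)] at h1
  rw [real_inner_comm (C - A) (P - A)] at h1
  apply mul_left_cancel₀ hPn
  linear_combination h1

lemma sin_add_lt {x y : ℝ} (hx : 0 < x) (hy : 0 < y) (hxy : x + y < π) :
    Real.sin (x + y) < Real.sin x + Real.sin y := by
  have hsx : 0 < Real.sin x := Real.sin_pos_of_pos_of_lt_pi hx (by linarith)
  have hsy : 0 < Real.sin y := Real.sin_pos_of_pos_of_lt_pi hy (by linarith)
  have hs2 : 0 < Real.sin (x/2) := by
    apply Real.sin_pos_of_pos_of_lt_pi (by linarith)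
    nlinarith [Real.pi_pos]
  have hp := Real.sin_sq_add_cos_sq (x/2)
  have hcx : Real.cos x < 1 := by
    rw [show x = 2*(x/2) by ring, Real.cos_two_mul]
    nlinarith [hs2, hp]
  rw [Real.sin_add]
  nlinarith [mul_nonneg (sub_nonneg.mpr (Real.cos_le_one y)) hsx.le,
    mul_pos (sub_pos.mpr hcx) hsy]

lemma core (O : EuclideanSpace ℝ (Fin 2)) (r u v w : ℝ) (hr : 0 < r)
    (huv : u < v) (hvw : v < w) (hwu : w < u + π) (X : EuclideanSpace ℝ (Fin 2))
    (g1 : ‖circlePt O r (2*v) - circlePt O r (2*u)‖ * ⟪circlePt O r (2*w) - circlePt O r (2*u), X - circlePt O r (2*u)⟫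
        = ‖circlePt O r (2*w) - circlePt O r (2*u)‖ * ⟪circlePt O r (2*v) - circlePt O r (2*u), X - circlePt O r (2*u)⟫)
    (g3 : ‖circlePt O r (2*v) - circlePt O r (2*w)‖ * ⟪circlePt O r (2*u) - circlePt O r (2*w), X - circlePt O r (2*w)⟫
        = ‖circlePt O r (2*u) - circlePt O r (2*w)‖ * ⟪circlePt O r (2*v) - circlePt O r (2*w), X - circlePt O r (2*w)⟫) :
    X 0 = O 0 + r * (Real.cos (u+v) - Real.cos (u+w) + Real.cos (v+w)) ∧
    X 1 = O 1 + r * (Real.sin (u+v) - Real.sin (u+w) + Real.sin (v+w)) := by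
  have pu := Real.sin_sq_add_cos_sq u
  have pv := Real.sin_sq_add_cos_sq v
  have pw := Real.sin_sq_add_cos_sq w
  have hsvu : 0 < Real.sin (v - u) := Real.sin_pos_of_pos_of_lt_pi (by linarith) (by linarith)
  have hswu : 0 < Real.sin (w - u) := Real.sin_pos_of_pos_of_lt_pi (by linarith) (by linarith)
  have hswv : 0 < Real.sin (w - v) := Real.sin_pos_of_pos_of_lt_pi (by linarith) (by linarith)
  rw [chord_s13 O r (2*v) (2*u) hr.le (by linarith) (by linarith),
      chord_s13 O r (2*w) (2*u) hr.le (by linarith) (by linarith),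
      show (2*v - 2*u)/2 = v - u by ring, show (2*w - 2*u)/2 = w - u by ring,
      inner_apply2, inner_apply2] at g1
  rw [norm_sub_rev (circlePt O r (2*v)) (circlePt O r (2*w)),
      norm_sub_rev (circlePt O r (2*u)) (circlePt O r (2*w)),
      chord_s13 O r (2*w) (2*v) hr.le (by linarith) (by linarith),
      chord_s13 O r (2*w) (2*u) hr.le (by linarith) (by linarith),
      show (2*w - 2*v)/2 = w - v by ring, show (2*w - 2*u)/2 = w - u by ring,
      inner_apply2, inner_apply2] at g3
  simp only [sub_apply2, circlePt_apply0, circlePt_apply1] at g1 g3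
  rw [show (2:ℝ)*u = u+u by ring, show (2:ℝ)*v = v+v by ring, show (2:ℝ)*w = w+w by ring] at g1 g3
  simp only [Real.cos_add, Real.sin_add, Real.sin_sub] at g1 g3
  have E1 : ((-1)*(Real.cos u)*(Real.sin w) + (Real.cos u)*(Real.sin v) + (-1)*(Real.sin u)*(Real.cos w) + (Real.sin u)*(Real.cos v)) * (X 0 - (O 0 + r * ((Real.cos v)*(Real.cos w) + (-1)*(Real.sin v)*(Real.sin w) + (-1)*(Real.cos u)*(Real.cos w) + (Real.cos u)*(Real.cos v) + (Real.sin u)*(Real.sin w) + (-1)*(Real.sin u)*(Real.sin v)))) + ((Real.cos u)*(Real.cos w) + (-1)*(Real.cos u)*(Real.cos v) + (-1)*(Real.sin u)*(Real.sin w) + (Real.sin u)*(Real.sin v)) * (X 1 - (O 1 + r * ((Real.cos v)*(Real.sin w) + (Real.sin v)*(Real.cos w) + (-1)*(Real.cos u)*(Real.sin w) + (Real.cos u)*(Real.sin v) + (-1)*(Real.sin u)*(Real.cos w) + (Real.sin u)*(Real.cos v)))) = 0 := by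
    have h : (4*r^2*Real.sin (v-u)*Real.sin (w-u)) * (((-1)*(Real.cos u)*(Real.sin w) + (Real.cos u)*(Real.sin v) + (-1)*(Real.sin u)*(Real.cos w) + (Real.sin u)*(Real.cos v)) * (X 0 - (O 0 + r * ((Real.cos v)*(Real.cos w) + (-1)*(Real.sin v)*(Real.sin w) + (-1)*(Real.cos u)*(Real.cos w) + (Real.cos u)*(Real.cos v) + (Real.sin u)*(Real.sin w) + (-1)*(Real.sin u)*(Real.sin v)))) + ((Real.cos u)*(Real.cos w) + (-1)*(Real.cos u)*(Real.cos v) + (-1)*(Real.sin u)*(Real.sin w) + (Real.sin u)*(Real.sin v)) * (X 1 - (O 1 + r * ((Real.cos v)*(Real.sin w) + (Real.sin v)*(Real.cos w) + (-1)*(Real.cos u)*(Real.sin w) + (Real.cos u)*(Real.sin v) + (-1)*(Real.sin u)*(Real.cos w) + (Real.sin u)*(Real.cos v))))) = 0 := by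
      simp only [Real.sin_sub]
      linear_combination g1 + ((-2)*(Real.cos u)*(Real.sin w)*(r)^2*(X 0) + 2*(Real.cos u)*(Real.sin w)*(r)^2*(O 0) + 2*(Real.cos u)*(Real.sin w)*(r)^3 + (-2)*(Real.cos u)*(Real.cos v)^2*(Real.sin w)*(r)^3 + 2*(Real.cos u)*(Real.sin v)*(r)^2*(X 0) + (-2)*(Real.cos u)*(Real.sin v)*(r)^2*(O 0) + (-2)*(Real.cos u)*(Real.sin v)*(r)^3 + 2*(Real.cos u)*(Real.sin v)*(Real.cos w)^2*(r)^3 + 4*(Real.cos u)*(Real.sin v)*(Real.sin w)*(Real.cos w)*(r)^2*(X 1) + (-4)*(Real.cos u)*(Real.sin v)*(Real.sin w)*(Real.cos w)*(r)^2*(O 1) + (-4)*(Real.cos u)*(Real.sin v)*(Real.sin w)^2*(r)^2*(X 0) + 4*(Real.cos u)*(Real.sin v)*(Real.sin w)^2*(r)^2*(O 0) + (-2)*(Real.cos u)*(Real.sin v)*(Real.sin w)^2*(r)^3 + (-4)*(Real.cos u)*(Real.sin v)*(Real.cos v)*(Real.sin w)*(r)^2*(X 1) + 4*(Real.cos u)*(Real.sin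 v)*(Real.cos v)*(Real.sin w)*(r)^2*(O 1) + 4*(Real.cos u)*(Real.sin v)*(Real.cos v)^2*(Real.sin w)^2*(r)^3 + 4*(Real.cos u)*(Real.sin v)^2*(Real.sin w)*(r)^2*(X 0) + (-4)*(Real.cos u)*(Real.sin v)^2*(Real.sin w)*(r)^2*(O 0) + 2*(Real.cos u)*(Real.sin v)^2*(Real.sin w)*(r)^3 + (-4)*(Real.cos u)*(Real.sin v)^2*(Real.sin w)*(Real.cos w)^2*(r)^3 + (-4)*(Real.cos u)*(Real.sin v)^2*(Real.sin w)^3*(r)^3 + 4*(Real.cos u)*(Real.sin v)^3*(Real.sin w)^2*(r)^3 + 2*(Real.cos u)^3*(Real.sin w)*(r)^3 + (-2)*(Real.cos u)^3*(Real.sin v)*(r)^3 + 2*(Real.sin u)*(Real.cos w)*(r)^2*(X 0) + (-2)*(Real.sin u)*(Real.cos w)*(r)^2*(O 0) + (-2)*(Real.sin u)*(Real.cos w)*(r)^3 + (-4)*(Real.sin u)*(Real.sin w)*(r)^2*(X 1) + 4*(Real.sin u)*(Real.sin w)*(r)^2*(O 1) + (-2)*(Real.sin u)*(Real.cos v)*(r)^2*(X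 0) + 2*(Real.sin u)*(Real.cos v)*(r)^2*(O 0) + 2*(Real.sin u)*(Real.cos v)*(r)^3 + (-2)*(Real.sin u)*(Real.cos v)*(Real.cos w)^2*(r)^3 + (-4)*(Real.sin u)*(Real.cos v)*(Real.sin w)*(Real.cos w)*(r)^2*(X 1) + 4*(Real.sin u)*(Real.cos v)*(Real.sin w)*(Real.cos w)*(r)^2*(O 1) + 4*(Real.sin u)*(Real.cos v)*(Real.sin w)^2*(r)^2*(X 0) + (-4)*(Real.sin u)*(Real.cos v)*(Real.sin w)^2*(r)^2*(O 0) + 2*(Real.sin u)*(Real.cos v)*(Real.sin w)^2*(r)^3 + 2*(Real.sin u)*(Real.cos v)^2*(Real.cos w)*(r)^3 + 4*(Real.sin u)*(Real.cos v)^2*(Real.sin w)*(r)^2*(X 1) + (-4)*(Real.sin u)*(Real.cos v)^2*(Real.sin w)*(r)^2*(O 1) + (-4)*(Real.sin u)*(Real.cos v)^3*(Real.sin w)^2*(r)^3 + 4*(Real.sin u)*(Real.sin v)*(r)^2*(X 1) + (-4)*(Real.sin u)*(Real.sin v)*(r)^2*(O 1) + (-4)*(Real.sin u)*(Real.sin v)*(Real.cos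 w)^2*(r)^2*(X 1) + 4*(Real.sin u)*(Real.sin v)*(Real.cos w)^2*(r)^2*(O 1) + 8*(Real.sin u)*(Real.sin v)*(Real.sin w)*(Real.cos w)*(r)^3 + (-4)*(Real.sin u)*(Real.sin v)*(Real.sin w)^2*(r)^2*(X 1) + 4*(Real.sin u)*(Real.sin v)*(Real.sin w)^2*(r)^2*(O 1) + 4*(Real.sin u)*(Real.sin v)*(Real.cos v)*(Real.cos w)*(r)^2*(X 1) + (-4)*(Real.sin u)*(Real.sin v)*(Real.cos v)*(Real.cos w)*(r)^2*(O 1) + (-8)*(Real.sin u)*(Real.sin v)*(Real.cos v)*(Real.sin w)*(r)^3 + 8*(Real.sin u)*(Real.sin v)*(Real.cos v)*(Real.sin w)*(Real.cos w)^2*(r)^3 + 8*(Real.sin u)*(Real.sin v)*(Real.cos v)*(Real.sin w)^3*(r)^3 + (-8)*(Real.sin u)*(Real.sin v)*(Real.cos v)^2*(Real.sin w)*(Real.cos w)*(r)^3 + (-4)*(Real.sin u)*(Real.sin v)^2*(Real.cos w)*(r)^2*(X 0) + 4*(Real.sin u)*(Real.sin v)^2*(Real.cos w)*(r)^2*(O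 0) + (-2)*(Real.sin u)*(Real.sin v)^2*(Real.cos w)*(r)^3 + 4*(Real.sin u)*(Real.sin v)^2*(Real.cos w)^3*(r)^3 + 4*(Real.sin u)*(Real.sin v)^2*(Real.sin w)*(r)^2*(X 1) + (-4)*(Real.sin u)*(Real.sin v)^2*(Real.sin w)*(r)^2*(O 1) + 4*(Real.sin u)*(Real.sin v)^2*(Real.sin w)^2*(Real.cos w)*(r)^3 + (-4)*(Real.sin u)*(Real.sin v)^2*(Real.cos v)*(Real.sin w)^2*(r)^3 + (-8)*(Real.sin u)*(Real.sin v)^3*(Real.sin w)*(Real.cos w)*(r)^3 + (-2)*(Real.sin u)*(Real.cos u)^2*(Real.cos w)*(r)^3 + 2*(Real.sin u)*(Real.cos u)^2*(Real.cos v)*(r)^3 + 2*(Real.sin u)^2*(Real.cos u)*(Real.sin w)*(r)^3 + (-2)*(Real.sin u)^2*(Real.cos u)*(Real.sin v)*(r)^3 + (-2)*(Real.sin u)^3*(Real.cos w)*(r)^3 + 2*(Real.sin u)^3*(Real.cos v)*(r)^3)*pu + (2*(Real.cos u)*(Real.sin w)*(r)^2*(X 0) + (-2)*(Real.cos u)*(Real.sin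 w)*(r)^2*(O 0) + (-2)*(Real.cos u)*(Real.sin w)*(r)^3 + 4*(Real.cos u)*(Real.sin v)*(Real.sin w)^2*(r)^3 + (-2)*(Real.sin u)*(Real.cos w)*(r)^2*(X 0) + 2*(Real.sin u)*(Real.cos w)*(r)^2*(O 0) + 2*(Real.sin u)*(Real.cos w)*(r)^3 + 4*(Real.sin u)*(Real.sin w)*(r)^2*(X 1) + (-4)*(Real.sin u)*(Real.sin w)*(r)^2*(O 1) + (-4)*(Real.sin u)*(Real.cos v)*(Real.sin w)^2*(r)^3 + (-8)*(Real.sin u)*(Real.sin v)*(Real.sin w)*(Real.cos w)*(r)^3 + (-4)*(Real.sin u)^2*(Real.cos u)*(Real.cos w)*(r)^2*(X 1) + 4*(Real.sin u)^2*(Real.cos u)*(Real.cos w)*(r)^2*(O 1) + (-4)*(Real.sin u)^2*(Real.cos u)*(Real.sin w)*(r)^2*(X 0) + 4*(Real.sin u)^2*(Real.cos u)*(Real.sin w)*(r)^2*(O 0) + 4*(Real.sin u)^2*(Real.cos u)*(Real.sin w)*(r)^3 + (-4)*(Real.sin u)^2*(Real.cos u)*(Real.sin w)*(Real.cos w)^2*(r)^3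 + (-4)*(Real.sin u)^2*(Real.cos u)*(Real.sin w)^3*(r)^3 + 8*(Real.sin u)^2*(Real.cos u)*(Real.cos v)*(Real.sin w)*(Real.cos w)*(r)^3 + 4*(Real.sin u)^2*(Real.cos u)*(Real.sin v)*(Real.cos w)^2*(r)^3 + (-4)*(Real.sin u)^2*(Real.cos u)*(Real.sin v)*(Real.sin w)^2*(r)^3 + 4*(Real.sin u)^3*(Real.cos w)*(r)^2*(X 0) + (-4)*(Real.sin u)^3*(Real.cos w)*(r)^2*(O 0) + (-4)*(Real.sin u)^3*(Real.cos w)*(r)^3 + 4*(Real.sin u)^3*(Real.cos w)^3*(r)^3 + (-4)*(Real.sin u)^3*(Real.sin w)*(r)^2*(X 1) + 4*(Real.sin u)^3*(Real.sin w)*(r)^2*(O 1) + 4*(Real.sin u)^3*(Real.sin w)^2*(Real.cos w)*(r)^3 + (-4)*(Real.sin u)^3*(Real.cos v)*(Real.cos w)^2*(r)^3 + 4*(Real.sin u)^3*(Real.cos v)*(Real.sin w)^2*(r)^3 + 8*(Real.sin u)^3*(Real.sin v)*(Real.sin w)*(Real.cos w)*(r)^3)*pv + ((-2)*(Real.cos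 u)*(Real.sin v)*(r)^2*(X 0) + 2*(Real.cos u)*(Real.sin v)*(r)^2*(O 0) + 2*(Real.cos u)*(Real.sin v)*(r)^3 + (-4)*(Real.cos u)*(Real.sin v)^2*(Real.sin w)*(r)^3 + 2*(Real.sin u)*(Real.cos v)*(r)^2*(X 0) + (-2)*(Real.sin u)*(Real.cos v)*(r)^2*(O 0) + (-2)*(Real.sin u)*(Real.cos v)*(r)^3 + (-4)*(Real.sin u)*(Real.sin v)*(r)^2*(X 1) + 4*(Real.sin u)*(Real.sin v)*(r)^2*(O 1) + 8*(Real.sin u)*(Real.sin v)*(Real.cos v)*(Real.sin w)*(r)^3 + 4*(Real.sin u)*(Real.sin v)^2*(Real.cos w)*(r)^3 + (-4)*(Real.sin u)^2*(Real.cos u)*(Real.sin w)*(r)^3 + 4*(Real.sin u)^2*(Real.cos u)*(Real.cos v)*(r)^2*(X 1) + (-4)*(Real.sin u)^2*(Real.cos u)*(Real.cos v)*(r)^2*(O 1) + 4*(Real.sin u)^2*(Real.cos u)*(Real.sin v)*(r)^2*(X 0) + (-4)*(Real.sin u)^2*(Real.cos u)*(Real.sin v)*(r)^2*(O 0) + (-8)*(Real.sin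 u)^2*(Real.cos u)*(Real.sin v)*(Real.cos v)*(Real.cos w)*(r)^3 + 8*(Real.sin u)^2*(Real.cos u)*(Real.sin v)^2*(Real.sin w)*(r)^3 + 4*(Real.sin u)^3*(Real.cos w)*(r)^3 + (-4)*(Real.sin u)^3*(Real.cos v)*(r)^2*(X 0) + 4*(Real.sin u)^3*(Real.cos v)*(r)^2*(O 0) + 4*(Real.sin u)^3*(Real.sin v)*(r)^2*(X 1) + (-4)*(Real.sin u)^3*(Real.sin v)*(r)^2*(O 1) + (-8)*(Real.sin u)^3*(Real.sin v)*(Real.cos v)*(Real.sin w)*(r)^3 + (-8)*(Real.sin u)^3*(Real.sin v)^2*(Real.cos w)*(r)^3)*pw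
    rcases mul_eq_zero.mp h with h' | h'
    · exact absurd h' (ne_of_gt (mul_pos (mul_pos (by positivity) hsvu) hswu))
    · exact h'
  have E3 : ((-1)*(Real.cos v)*(Real.sin w) + (-1)*(Real.sin v)*(Real.cos w) + (Real.cos u)*(Real.sin w) + (Real.sin u)*(Real.cos w)) * (X 0 - (O 0 + r * ((Real.cos v)*(Real.cos w) + (-1)*(Real.sin v)*(Real.sin w) + (-1)*(Real.cos u)*(Real.cos w) + (Real.cos u)*(Real.cos v) + (Real.sin u)*(Real.sin w) + (-1)*(Real.sin u)*(Real.sin v)))) + ((Real.cos v)*(Real.cos w) + (-1)*(Real.sin v)*(Real.sin w) + (-1)*(Real.cos u)*(Real.cos w) + (Real.sin u)*(Real.sin w)) * (X 1 - (O 1 + r * ((Real.cos v)*(Real.sin w) + (Real.sin v)*(Real.cos w) + (-1)*(Real.cos u)*(Real.sin w) + (Real.cos u)*(Real.sin v) + (-1)*(Real.sin u)*(Real.cos w) + (Real.sin u)*(Real.cos v)))) = 0 := by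
    have h : (4*r^2*Real.sin (w-v)*Real.sin (w-u)) * (((-1)*(Real.cos v)*(Real.sin w) + (-1)*(Real.sin v)*(Real.cos w) + (Real.cos u)*(Real.sin w) + (Real.sin u)*(Real.cos w)) * (X 0 - (O 0 + r * ((Real.cos v)*(Real.cos w) + (-1)*(Real.sin v)*(Real.sin w) + (-1)*(Real.cos u)*(Real.cos w) + (Real.cos u)*(Real.cos v) + (Real.sin u)*(Real.sin w) + (-1)*(Real.sin u)*(Real.sin v)))) + ((Real.cos v)*(Real.cos w) + (-1)*(Real.sin v)*(Real.sin w) + (-1)*(Real.cos u)*(Real.cos w) + (Real.sin u)*(Real.sin w)) * (X 1 - (O 1 + r * ((Real.cos v)*(Real.sin w) + (Real.sin v)*(Real.cos w) + (-1)*(Real.cos u)*(Real.sin w) + (Real.cos u)*(Real.sin v) + (-1)*(Real.sin u)*(Real.cos w) + (Real.sin u)*(Real.cos v))))) = 0 := by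
      simp only [Real.sin_sub]
      linear_combination g3 + ((-2)*(Real.cos v)*(Real.sin w)*(r)^2*(X 0) + 2*(Real.cos v)*(Real.sin w)*(r)^2*(O 0) + 2*(Real.cos v)*(Real.sin w)*(Real.cos w)^2*(r)^3 + (-4)*(Real.cos v)*(Real.sin w)^2*(Real.cos w)*(r)^2*(X 1) + 4*(Real.cos v)*(Real.sin w)^2*(Real.cos w)*(r)^2*(O 1) + 4*(Real.cos v)*(Real.sin w)^3*(r)^2*(X 0) + (-4)*(Real.cos v)*(Real.sin w)^3*(r)^2*(O 0) + (-2)*(Real.cos v)*(Real.sin w)^3*(r)^3 + 4*(Real.cos v)^3*(Real.sin w)^3*(r)^3 + 2*(Real.sin v)*(Real.cos w)*(r)^2*(X 0) + (-2)*(Real.sin v)*(Real.cos w)*(r)^2*(O 0) + (-2)*(Real.sin v)*(Real.cos w)^3*(r)^3 + 4*(Real.sin v)*(Real.sin w)*(Real.cos w)^2*(r)^2*(X 1) + (-4)*(Real.sin v)*(Real.sin w)*(Real.cos w)^2*(r)^2*(O 1) + (-4)*(Real.sin v)*(Real.sin w)^2*(Real.cos w)*(r)^2*(X 0) + 4*(Real.sin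 v)*(Real.sin w)^2*(Real.cos w)*(r)^2*(O 0) + 2*(Real.sin v)*(Real.sin w)^2*(Real.cos w)*(r)^3 + (-4)*(Real.sin v)*(Real.cos v)^2*(Real.sin w)^2*(Real.cos w)*(r)^3 + 4*(Real.sin v)^2*(Real.cos v)*(Real.sin w)^3*(r)^3 + (-4)*(Real.sin v)^3*(Real.sin w)^2*(Real.cos w)*(r)^3 + (-4)*(Real.cos u)*(Real.cos v)^2*(Real.sin w)^3*(r)^3 + 8*(Real.cos u)*(Real.sin v)*(Real.cos v)*(Real.sin w)^2*(Real.cos w)*(r)^3 + (-4)*(Real.cos u)*(Real.sin v)^2*(Real.sin w)*(Real.cos w)^2*(r)^3 + 4*(Real.sin u)*(Real.cos v)^2*(Real.sin w)^2*(Real.cos w)*(r)^3 + (-8)*(Real.sin u)*(Real.sin v)*(Real.cos v)*(Real.sin w)*(Real.cos w)^2*(r)^3 + 4*(Real.sin u)*(Real.sin v)^2*(Real.cos w)^3*(r)^3)*pu + (4*(Real.cos v)*(Real.sin w)^3*(r)^3 + (-4)*(Real.sin v)*(Real.sin w)^2*(Real.cos w)*(r)^3 + 2*(Real.cos u)*(Real.sin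 w)*(r)^2*(X 0) + (-2)*(Real.cos u)*(Real.sin w)*(r)^2*(O 0) + (-2)*(Real.cos u)*(Real.sin w)*(Real.cos w)^2*(r)^3 + 4*(Real.cos u)*(Real.sin w)^2*(Real.cos w)*(r)^2*(X 1) + (-4)*(Real.cos u)*(Real.sin w)^2*(Real.cos w)*(r)^2*(O 1) + (-4)*(Real.cos u)*(Real.sin w)^3*(r)^2*(X 0) + 4*(Real.cos u)*(Real.sin w)^3*(r)^2*(O 0) + (-2)*(Real.cos u)*(Real.sin w)^3*(r)^3 + (-2)*(Real.sin u)*(Real.cos w)*(r)^2*(X 0) + 2*(Real.sin u)*(Real.cos w)*(r)^2*(O 0) + 2*(Real.sin u)*(Real.cos w)^3*(r)^3 + (-4)*(Real.sin u)*(Real.sin w)*(Real.cos w)^2*(r)^2*(X 1) + 4*(Real.sin u)*(Real.sin w)*(Real.cos w)^2*(r)^2*(O 1) + 4*(Real.sin u)*(Real.sin w)^2*(Real.cos w)*(r)^2*(X 0) + (-4)*(Real.sin u)*(Real.sin w)^2*(Real.cos w)*(r)^2*(O 0) + 2*(Real.sin u)*(Real.sin w)^2*(Real.cos w)*(r)^3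 + (-8)*(Real.sin u)*(Real.cos u)*(Real.cos v)*(Real.sin w)^2*(Real.cos w)*(r)^3 + 8*(Real.sin u)*(Real.cos u)*(Real.sin v)*(Real.sin w)*(Real.cos w)^2*(r)^3 + 4*(Real.sin u)^2*(Real.cos v)*(Real.sin w)*(Real.cos w)^2*(r)^3 + (-4)*(Real.sin u)^2*(Real.cos v)*(Real.sin w)^3*(r)^3 + (-4)*(Real.sin u)^2*(Real.sin v)*(Real.cos w)^3*(r)^3 + 4*(Real.sin u)^2*(Real.sin v)*(Real.sin w)^2*(Real.cos w)*(r)^3)*pv + (2*(Real.cos v)*(Real.sin w)*(r)^2*(X 0) + (-2)*(Real.cos v)*(Real.sin w)*(r)^2*(O 0) + (-2)*(Real.cos v)*(Real.sin w)*(Real.cos w)^2*(r)^3 + (-2)*(Real.cos v)*(Real.sin w)^3*(r)^3 + (-2)*(Real.sin v)*(Real.cos w)*(r)^2*(X 0) + 2*(Real.sin v)*(Real.cos w)*(r)^2*(O 0) + 2*(Real.sin v)*(Real.cos w)^3*(r)^3 + 2*(Real.sin v)*(Real.sin w)^2*(Real.cos w)*(r)^3 + (-2)*(Real.cos u)*(Real.sin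 w)*(r)^2*(X 0) + 2*(Real.cos u)*(Real.sin w)*(r)^2*(O 0) + 2*(Real.cos u)*(Real.sin w)*(Real.cos w)^2*(r)^3 + 2*(Real.cos u)*(Real.sin w)^3*(r)^3 + (-4)*(Real.cos u)*(Real.sin v)*(Real.cos v)*(Real.sin w)*(r)^2*(X 1) + 4*(Real.cos u)*(Real.sin v)*(Real.cos v)*(Real.sin w)*(r)^2*(O 1) + 4*(Real.cos u)*(Real.sin v)^2*(Real.sin w)*(r)^2*(X 0) + (-4)*(Real.cos u)*(Real.sin v)^2*(Real.sin w)*(r)^2*(O 0) + 2*(Real.sin u)*(Real.cos w)*(r)^2*(X 0) + (-2)*(Real.sin u)*(Real.cos w)*(r)^2*(O 0) + (-2)*(Real.sin u)*(Real.cos w)^3*(r)^3 + (-2)*(Real.sin u)*(Real.sin w)^2*(Real.cos w)*(r)^3 + 4*(Real.sin u)*(Real.sin v)*(Real.cos v)*(Real.cos w)*(r)^2*(X 1) + (-4)*(Real.sin u)*(Real.sin v)*(Real.cos v)*(Real.cos w)*(r)^2*(O 1) + (-4)*(Real.sin u)*(Real.sin v)^2*(Real.cos w)*(r)^2*(X 0)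 + 4*(Real.sin u)*(Real.sin v)^2*(Real.cos w)*(r)^2*(O 0) + 4*(Real.sin u)*(Real.cos u)*(Real.cos v)*(Real.sin w)*(r)^2*(X 1) + (-4)*(Real.sin u)*(Real.cos u)*(Real.cos v)*(Real.sin w)*(r)^2*(O 1) + (-4)*(Real.sin u)*(Real.cos u)*(Real.sin v)*(Real.cos w)*(r)^2*(X 1) + 4*(Real.sin u)*(Real.cos u)*(Real.sin v)*(Real.cos w)*(r)^2*(O 1) + (-4)*(Real.sin u)^2*(Real.cos v)*(Real.sin w)*(r)^2*(X 0) + 4*(Real.sin u)^2*(Real.cos v)*(Real.sin w)*(r)^2*(O 0) + 4*(Real.sin u)^2*(Real.sin v)*(Real.cos w)*(r)^2*(X 0) + (-4)*(Real.sin u)^2*(Real.sin v)*(Real.cos w)*(r)^2*(O 0))*pw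
    rcases mul_eq_zero.mp h with h' | h'
    · exact absurd h' (ne_of_gt (mul_pos (mul_pos (by positivity) hswv) hswu))
    · exact h'
  have hDpos : 0 < Real.sin (w-v) + Real.sin (v-u) - Real.sin (w-u) := by
    have h := sin_add_lt (show 0 < w - v by linarith) (show 0 < v - u by linarith)
      (show (w-v) + (v-u) < π by linarith)
    rw [show (w-v) + (v-u) = w - u by ring] at h
    linarith
  have hd0 : (Real.sin (w-v) + Real.sin (v-u) - Real.sin (w-u)) * (X 0 - (O 0 + r * ((Real.cos v)*(Real.cos w) + (-1)*(Real.sin v)*(Real.sin w) + (-1)*(Real.cos u)*(Real.cos w) + (Real.cos u)*(Real.cos v) + (Real.sin u)*(Real.sin w) + (-1)*(Real.sin u)*(Real.sin v)))) = 0 := by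
    simp only [Real.sin_sub]
    linear_combination ((Real.cos v)*(Real.cos w) + (-1)*(Real.sin v)*(Real.sin w) + (-1)*(Real.cos u)*(Real.cos w) + (Real.sin u)*(Real.sin w))*E1 - ((Real.cos u)*(Real.cos w) + (-1)*(Real.cos u)*(Real.cos v) + (-1)*(Real.sin u)*(Real.sin w) + (Real.sin u)*(Real.sin v))*E3 + ((-1)*(Real.sin w)*(Real.cos w)*(r) + (-1)*(Real.cos v)*(Real.sin w)*(X 0) + (Real.cos v)*(Real.sin w)*(O 0) + (Real.cos v)*(Real.sin w)*(r) + 2*(Real.cos v)^2*(Real.sin w)*(Real.cos w)*(r) + (-1)*(Real.cos v)^3*(Real.sin w)*(r) + (Real.sin v)*(Real.cos w)*(X 0) + (-1)*(Real.sin v)*(Real.cos w)*(O 0) + (Real.sin v)*(Real.cos w)*(r) + (-1)*(Real.sin v)*(Real.cos w)^3*(r) + (-1)*(Real.sin v)*(Real.sin w)^2*(Real.cos w)*(r) + (-1)*(Real.sin v)*(Real.cos v)*(r) + 2*(Real.sin v)^2*(Real.sin w)*(Real.cos w)*(r) + (-1)*(Real.sin v)^2*(Real.cos v)*(Real.sin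 w)*(r) + (-1)*(Real.cos u)*(Real.cos v)*(Real.sin w)*(Real.cos w)*(r) + (Real.cos u)*(Real.cos v)^2*(Real.sin w)*(r) + (Real.cos u)*(Real.sin v)*(Real.cos w)^2*(r) + (-1)*(Real.cos u)*(Real.sin v)*(Real.cos v)*(Real.cos w)*(r) + (Real.sin u)*(Real.cos v)*(Real.sin w)^2*(r) + (-1)*(Real.sin u)*(Real.sin v)*(Real.sin w)*(Real.cos w)*(r) + (-1)*(Real.sin u)*(Real.sin v)*(Real.cos v)*(Real.sin w)*(r) + (Real.sin u)*(Real.sin v)^2*(Real.cos w)*(r))*pu + ((Real.sin w)*(Real.cos w)*(r) + (-1)*(Real.cos v)*(Real.sin w)*(r) + (Real.cos u)*(Real.sin w)*(X 0) + (-1)*(Real.cos u)*(Real.sin w)*(O 0) + (-1)*(Real.cos u)*(Real.cos v)*(Real.sin w)*(Real.cos w)*(r) + (Real.cos u)*(Real.sin v)*(Real.sin w)^2*(r) + (-1)*(Real.sin u)*(Real.cos w)*(X 0) + (Real.sin u)*(Real.cos w)*(O 0) + (Real.sin u)*(Real.cos w)*(r) + (-1)*(Real.sin u)*(Real.cos w)^3*(r)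 + (-1)*(Real.sin u)*(Real.sin w)^2*(Real.cos w)*(r) + (Real.sin u)*(Real.cos v)*(Real.cos w)^2*(r) + (-1)*(Real.sin u)*(Real.sin v)*(Real.sin w)*(Real.cos w)*(r) + (Real.sin u)*(Real.cos u)*(r) + (-2)*(Real.sin u)*(Real.cos u)*(Real.cos w)^2*(r) + (-2)*(Real.sin u)*(Real.cos u)*(Real.sin w)^2*(r) + (Real.sin u)*(Real.cos u)*(Real.cos v)*(Real.cos w)*(r) + (Real.sin u)*(Real.cos u)*(Real.sin v)*(Real.sin w)*(r) + (Real.sin u)^2*(Real.cos v)*(Real.sin w)*(r) + (-1)*(Real.sin u)^2*(Real.sin v)*(Real.cos w)*(r))*pv + ((-1)*(Real.sin v)*(Real.cos w)*(r) + (Real.sin v)*(Real.cos v)*(r) + (-1)*(Real.cos u)*(Real.sin v)*(X 0) + (Real.cos u)*(Real.sin v)*(O 0) + (Real.cos u)*(Real.sin v)*(Real.cos v)*(Real.cos w)*(r) + (-1)*(Real.cos u)*(Real.sin v)^2*(Real.sin w)*(r) + (-1)*(Real.sin u)*(Real.cos w)*(r) + (Real.sin u)*(Real.cos v)*(X 0)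 + (-1)*(Real.sin u)*(Real.cos v)*(O 0) + (Real.sin u)*(Real.sin v)*(Real.cos v)*(Real.sin w)*(r) + (Real.sin u)*(Real.sin v)^2*(Real.cos w)*(r) + (-1)*(Real.sin u)*(Real.cos u)*(r) + (Real.sin u)*(Real.cos u)*(Real.cos v)*(Real.cos w)*(r) + (Real.sin u)*(Real.cos u)*(Real.sin v)*(Real.sin w)*(r) + (-1)*(Real.sin u)^2*(Real.cos v)*(Real.sin w)*(r) + (Real.sin u)^2*(Real.sin v)*(Real.cos w)*(r))*pw
  have hd1 : (Real.sin (w-v) + Real.sin (v-u) - Real.sin (w-u)) * (X 1 - (O 1 + r * ((Real.cos v)*(Real.sin w) + (Real.sin v)*(Real.cos w) + (-1)*(Real.cos u)*(Real.sin w) + (Real.cos u)*(Real.sin v) + (-1)*(Real.sin u)*(Real.cos w) + (Real.sin u)*(Real.cos v)))) = 0 := by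
    simp only [Real.sin_sub]
    linear_combination ((-1)*(Real.cos u)*(Real.sin w) + (Real.cos u)*(Real.sin v) + (-1)*(Real.sin u)*(Real.cos w) + (Real.sin u)*(Real.cos v))*E3 - ((-1)*(Real.cos v)*(Real.sin w) + (-1)*(Real.sin v)*(Real.cos w) + (Real.cos u)*(Real.sin w) + (Real.sin u)*(Real.cos w))*E1 + ((-1)*(Real.sin w)^2*(r) + (-1)*(Real.cos v)*(Real.sin w)*(X 1) + (Real.cos v)*(Real.sin w)*(O 1) + 2*(Real.cos v)^2*(Real.sin w)^2*(r) + (Real.sin v)*(Real.cos w)*(X 1) + (-1)*(Real.sin v)*(Real.cos w)*(O 1) + 2*(Real.sin v)*(Real.sin w)*(r) + (-1)*(Real.sin v)*(Real.sin w)*(Real.cos w)^2*(r) + (-1)*(Real.sin v)*(Real.sin w)^3*(r) + (-1)*(Real.sin v)*(Real.cos v)^2*(Real.sin w)*(r) + (-1)*(Real.sin v)^2*(r) + 2*(Real.sin v)^2*(Real.sin w)^2*(r) + (-1)*(Real.sin v)^3*(Real.sin w)*(r) + (-1)*(Real.cos u)*(Real.cos v)*(Real.sin w)^2*(r) + (Real.cos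 u)*(Real.sin v)*(Real.sin w)*(Real.cos w)*(r) + (Real.cos u)*(Real.sin v)*(Real.cos v)*(Real.sin w)*(r) + (-1)*(Real.cos u)*(Real.sin v)^2*(Real.cos w)*(r) + (-1)*(Real.sin u)*(Real.cos v)*(Real.sin w)*(Real.cos w)*(r) + (Real.sin u)*(Real.cos v)^2*(Real.sin w)*(r) + (Real.sin u)*(Real.sin v)*(Real.cos w)^2*(r) + (-1)*(Real.sin u)*(Real.sin v)*(Real.cos v)*(Real.cos w)*(r))*pu + ((Real.sin w)^2*(r) + (-1)*(Real.sin v)*(Real.sin w)*(r) + (Real.cos u)*(Real.sin w)*(X 1) + (-1)*(Real.cos u)*(Real.sin w)*(O 1) + (-1)*(Real.cos u)*(Real.cos v)*(Real.sin w)^2*(r) + (-1)*(Real.cos u)*(Real.sin v)*(Real.sin w)*(Real.cos w)*(r) + (-1)*(Real.sin u)*(Real.cos w)*(X 1) + (Real.sin u)*(Real.cos w)*(O 1) + (Real.sin u)*(Real.sin w)*(r) + (-1)*(Real.sin u)*(Real.sin w)*(Real.cos w)^2*(r) + (-1)*(Real.sin u)*(Real.sin w)^3*(r) + (Real.sin u)*(Real.cos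 v)*(Real.sin w)*(Real.cos w)*(r) + (Real.sin u)*(Real.sin v)*(Real.cos w)^2*(r) + (-1)*(Real.sin u)*(Real.cos u)*(Real.cos v)*(Real.sin w)*(r) + (Real.sin u)*(Real.cos u)*(Real.sin v)*(Real.cos w)*(r) + (Real.sin u)^2*(r) + (-2)*(Real.sin u)^2*(Real.cos w)^2*(r) + (-2)*(Real.sin u)^2*(Real.sin w)^2*(r) + (Real.sin u)^2*(Real.cos v)*(Real.cos w)*(r) + (Real.sin u)^2*(Real.sin v)*(Real.sin w)*(r))*pv + ((-1)*(Real.sin v)*(Real.sin w)*(r) + (Real.sin v)^2*(r) + (-1)*(Real.cos u)*(Real.sin v)*(X 1) + (Real.cos u)*(Real.sin v)*(O 1) + (Real.cos u)*(Real.sin v)*(Real.cos v)*(Real.sin w)*(r) + (Real.cos u)*(Real.sin v)^2*(Real.cos w)*(r) + (-1)*(Real.sin u)*(Real.sin w)*(r) + (Real.sin u)*(Real.cos v)*(X 1) + (-1)*(Real.sin u)*(Real.cos v)*(O 1) + (-1)*(Real.sin u)*(Real.sin v)*(Real.cos v)*(Real.cos w)*(r) + (Real.sin u)*(Real.sin v)^2*(Real.sin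 w)*(r) + (Real.sin u)*(Real.cos u)*(Real.cos v)*(Real.sin w)*(r) + (-1)*(Real.sin u)*(Real.cos u)*(Real.sin v)*(Real.cos w)*(r) + (-1)*(Real.sin u)^2*(r) + (Real.sin u)^2*(Real.cos v)*(Real.cos w)*(r) + (Real.sin u)^2*(Real.sin v)*(Real.sin w)*(r))*pw
  have hx0 : (X 0 - (O 0 + r * ((Real.cos v)*(Real.cos w) + (-1)*(Real.sin v)*(Real.sin w) + (-1)*(Real.cos u)*(Real.cos w) + (Real.cos u)*(Real.cos v) + (Real.sin u)*(Real.sin w) + (-1)*(Real.sin u)*(Real.sin v)))) = 0 := by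
    rcases mul_eq_zero.mp hd0 with h' | h'
    · exact absurd h' (ne_of_gt hDpos)
    · exact h'
  have hx1 : (X 1 - (O 1 + r * ((Real.cos v)*(Real.sin w) + (Real.sin v)*(Real.cos w) + (-1)*(Real.cos u)*(Real.sin w) + (Real.cos u)*(Real.sin v) + (-1)*(Real.sin u)*(Real.cos w) + (Real.sin u)*(Real.cos v)))) = 0 := by
    rcases mul_eq_zero.mp hd1 with h' | h'
    · exact absurd h' (ne_of_gt hDpos)
    · exact h'
  constructor
  · rw [Real.cos_add, Real.cos_add, Real.cos_add]
    linear_combination hx0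
  · rw [Real.sin_add, Real.sin_add, Real.sin_add]
    linear_combination hx1

/-- With `A, B, C, D` in cyclic order on a circle, `X, Y, Z, T` the incenters of triangles
`ADC, DCB, CBA, BAD`, `E` the intersection of the diagonals of rectangle `XYZT` (i.e.
the midpoint of `XZ`), and `F`, `H` the midpoints of arcs `CD` and `AB`, the point `E`
lies on the segment `FH`. -/
theorem stmt_13 (O : EuclideanSpace ℝ (Fin 2)) (r a b c d : ℝ) (hr : 0 < r)
    (hab : a < b) (hbc : b < c) (hcd : c < d) (hda : d < a + 2 * π)
    (X Y Z T : EuclideanSpace ℝ (Fin 2))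
    (hX : IsIncenter X (circlePt O r a) (circlePt O r d) (circlePt O r c))
    (hY : IsIncenter Y (circlePt O r d) (circlePt O r c) (circlePt O r b))
    (hZ : IsIncenter Z (circlePt O r c) (circlePt O r b) (circlePt O r a))
    (hT : IsIncenter T (circlePt O r b) (circlePt O r a) (circlePt O r d)) :
    midpoint ℝ X Z ∈ segment ℝ (circlePt O r ((c + d) / 2)) (circlePt O r ((a + b) / 2)) := by
  have hpi := Real.pi_pos
  have hXc := core O r (a/2) (c/2) (d/2) hr (by linarith) (by linarith) (by linarith) X
    (by rw [show 2*(a/2) = a by ring, show 2*(c/2) = c by ring, show 2*(d/2) = d by ring]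
        exact bisector hX.1)
    (by rw [show 2*(a/2) = a by ring, show 2*(c/2) = c by ring, show 2*(d/2) = d by ring]
        exact (bisector hX.2.1).symm)
  have hZc := core O r (a/2) (b/2) (c/2) hr (by linarith) (by linarith) (by linarith) Z
    (by rw [show 2*(a/2) = a by ring, show 2*(b/2) = b by ring, show 2*(c/2) = c by ring]
        exact bisector hZ.2.2)
    (by rw [show 2*(a/2) = a by ring, show 2*(b/2) = b by ring, show 2*(c/2) = c by ring]
        exact (bisector hZ.1).symm)
  have hg : 0 < Real.sin ((c-a)/4) := by
    apply Real.sin_pos_of_pos_of_lt_pi (by linarith) (by linarith)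
  have hh : 0 < Real.sin ((d-b)/4) := by
    apply Real.sin_pos_of_pos_of_lt_pi (by linarith) (by linarith)
  have hcg : 0 ≤ Real.cos ((c-a)/4) := by
    apply Real.cos_nonneg_of_mem_Icc; constructor <;> [linarith; linarith]
  have hch : 0 ≤ Real.cos ((d-b)/4) := by
    apply Real.cos_nonneg_of_mem_Icc; constructor <;> [linarith; linarith]
  have hsgh : 0 < Real.sin ((c-a)/4 + (d-b)/4) := by
    apply Real.sin_pos_of_pos_of_lt_pi (by linarith) (by linarith)
  refine ⟨Real.sin ((c-a)/4) * Real.cos ((d-b)/4) / Real.sin ((c-a)/4 + (d-b)/4),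
          Real.cos ((c-a)/4) * Real.sin ((d-b)/4) / Real.sin ((c-a)/4 + (d-b)/4),
          div_nonneg (mul_nonneg hg.le hch) hsgh.le,
          div_nonneg (mul_nonneg hcg hh.le) hsgh.le,
          by rw [← add_div, ← Real.sin_add, div_self hsgh.ne'], ?_⟩
  ext i
  fin_cases i
  · show _ = midpoint ℝ X Z 0
    rw [midpoint_eq_smul_add]
    simp only [Fin.zero_eta, Fin.mk_one, invOf_eq_inv, PiLp.add_apply, PiLp.smul_apply, smul_eq_mul]
    rw [circlePt_apply0, circlePt_apply0, hXc.1, hZc.1]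
    rw [div_mul_eq_mul_div, div_mul_eq_mul_div, ← add_div, div_eq_iff hsgh.ne']
    rw [show (c+d)/2 = ((a+b+c+d)/4 + (c-a)/4) + (d-b)/4 by ring,
        show (a+b)/2 = ((a+b+c+d)/4 - (c-a)/4) - (d-b)/4 by ring,
        show a/2+c/2 = (a+b+c+d)/4 - (b+d-a-c)/4 by ring,
        show a/2+d/2 = ((a+b+c+d)/4 - (c-a)/4) + (d-b)/4 by ring,
        show c/2+d/2 = ((a+b+c+d)/4 + (c-a)/4) + (d-b)/4 by ring,
        show a/2+b/2 = ((a+b+c+d)/4 - (c-a)/4) - (d-b)/4 by ring,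
        show b/2+c/2 = ((a+b+c+d)/4 + (c-a)/4) - (d-b)/4 by ring]
    simp only [Real.cos_add, Real.sin_add, Real.cos_sub, Real.sin_sub]
    ring
  · show _ = midpoint ℝ X Z 1
    rw [midpoint_eq_smul_add]
    simp only [Fin.zero_eta, Fin.mk_one, invOf_eq_inv, PiLp.add_apply, PiLp.smul_apply, smul_eq_mul]
    rw [circlePt_apply1, circlePt_apply1, hXc.2, hZc.2]
    rw [div_mul_eq_mul_div, div_mul_eq_mul_div, ← add_div, div_eq_iff hsgh.ne']
    rw [show (c+d)/2 = ((a+b+c+d)/4 + (c-a)/4) + (d-b)/4 by ring,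
        show (a+b)/2 = ((a+b+c+d)/4 - (c-a)/4) - (d-b)/4 by ring,
        show a/2+c/2 = (a+b+c+d)/4 - (b+d-a-c)/4 by ring,
        show a/2+d/2 = ((a+b+c+d)/4 - (c-a)/4) + (d-b)/4 by ring,
        show c/2+d/2 = ((a+b+c+d)/4 + (c-a)/4) + (d-b)/4 by ring,
        show a/2+b/2 = ((a+b+c+d)/4 - (c-a)/4) - (d-b)/4 by ring,
        show b/2+c/2 = ((a+b+c+d)/4 + (c-a)/4) - (d-b)/4 by ring]
    simp only [Real.cos_add, Real.sin_add, Real.cos_sub, Real.sin_sub]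
    ring
end
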